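/- Let a Bayesian network over finite variables V ∪ {X} be given by a DAG G and CPTs {f_V}, inducing the joint distribution Pr = ∏_V f_V · f_X. Let X be a functional variable, and let the network M' over V be obtained by functional elimination of X: the DAG is the functional elimination of X from G, the CPT of each child C of X is replaced by ∑_X f_X f_C, and all other CPTs are unchanged. Then the distribution Pr' induced by M' equals the marginal ∑_x Pr(x, ·) of Pr over V. -/
import Mathlib


/-- Functionally eliminating a functional variable `X` from a Bayesian
network preserves the marginal distribution over the remaining variables `V`.
Variables other than `X` are indexed by `ι` with states `S i`; `X` has states `TX`.
`Ch` is the set of children of `X`: the CPT `f i` of a non-child `i` does not depend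
on the state of `X`. The eliminated network replaces the CPT of each child `C` of
`X` by `∑ x, fX x · f C`, leaving other CPTs unchanged; its joint equals the
marginal `∑ x` of the original joint. -/
theorem functional_elimination_preserves_marginal
    {ι TX : Type*} [Fintype ι] [DecidableEq ι] [Fintype TX] [Inhabited TX]
    {S : ι → Type*} [∀ i, Fintype (S i)]
    (Ch : Finset ι)
    (f : (i : ι) → (∀ j, S j) → TX → ℝ)
    (fX : TX → (∀ j, S j) → ℝ)
    (hnotchild : ∀ i, i ∉ Ch → ∀ v x x', f i v x = f i v x')
    (hnn : ∀ i v x, 0 ≤ f i v x) (hXnn : ∀ x v, 0 ≤ fX x v)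
    (hfunc : ∀ x v, fX x v = 0 ∨ fX x v = 1)
    (hXsum : ∀ v, ∑ x, fX x v = 1) :
    ∀ v : ∀ j, S j,
      (∏ i, (if i ∈ Ch then ∑ x, fX x v * f i v x else f i v default))
        = ∑ x, fX x v * ∏ i, f i v x := by
  classical
  intro v
  obtain ⟨x₀, hx₀⟩ : ∃ x₀, fX x₀ v = 1 := by
    by_contra h
    push_neg at h
    have h0 : ∑ x, fX x v = 0 :=
      Finset.sum_eq_zero fun x _ => (hfunc x v).resolve_right (h x)
    rw [hXsum v] at h0; norm_num at h0
  have hz : ∀ x, x ≠ x₀ → fX x v = 0 := by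
    intro x hx
    rcases hfunc x v with h0 | h1
    · exact h0
    · exfalso
      have hle := Finset.sum_le_sum_of_subset_of_nonneg
        (Finset.subset_univ ({x, x₀} : Finset TX)) (fun y _ _ => hXnn y v)
      rw [Finset.sum_pair hx, hXsum v, h1, hx₀] at hle
      linarith
  have hsum : ∀ g : TX → ℝ, ∑ x, fX x v * g x = g x₀ := by
    intro g
    rw [Finset.sum_eq_single x₀]
    · rw [hx₀, one_mul]
    · intro b _ hb; rw [hz b hb, zero_mul]
    · intro h; exact absurd (Finset.mem_univ x₀) h
  rw [hsum]
  refine Finset.prod_congr rfl fun i _ => ?_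
  by_cases hi : i ∈ Ch
  · simp only [hi, if_true]; exact hsum (f i v)
  · simp only [hi, if_false]; exact hnotchild i hi v default x₀
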